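/- Let a ∈ L^∞(ℝ₊) ∩ L¹(ℝ₊) be continuous and piecewise C² on [0,∞) with lim_{x→∞} a(x) = 0 and a'' ∈ L¹(ℝ₊). Then the integral operator H_a on L²[1,∞) with kernel H_a(x,y) = −sin(2α)a(0)/(π(x+y)) + (1/π)∫_0^∞ cos((x+y)t − 2α) a(t) dt is Hilbert–Schmidt; in fact |H_a(x,y)| ≤ C/(x+y)² for some constant C. -/

import Mathlib

open MeasureTheory Set Filter
open intervalIntegral

noncomputable section

/-- `f` is piecewise `Cⁿ` on `[0, ∞)`: there are points `0 = t₀ < t₁ < … < t_N` such that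
`f` is `n` times continuously differentiable on each `[tᵢ, tᵢ₊₁]` and on `[t_N, ∞)`,
one-sided derivatives being understood at the endpoints. -/
def PiecewiseCn (n : ℕ) (f : ℝ → ℂ) : Prop :=
  ∃ (N : ℕ) (t : Fin (N + 1) → ℝ), t 0 = 0 ∧ StrictMono t ∧
    (∀ i : Fin N, ContDiffOn ℝ n f (Set.Icc (t i.castSucc) (t i.succ))) ∧
    ContDiffOn ℝ n f (Set.Ici (t (Fin.last N)))

lemma hasDerivAt_sinc (ω β t : ℝ) :
    HasDerivAt (fun t : ℝ => ((Real.sin (ω * t - β) : ℝ) : ℂ))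
      ((Real.cos (ω * t - β) * ω : ℝ) : ℂ) t := by
  have h1 : HasDerivAt (fun t : ℝ => ω * t - β) ω t := by
    simpa using ((hasDerivAt_id t).const_mul ω).sub_const β
  exact ((Real.hasDerivAt_sin _).comp t h1).ofReal_comp

lemma hasDerivAt_cosc (ω β t : ℝ) :
    HasDerivAt (fun t : ℝ => ((Real.cos (ω * t - β) : ℝ) : ℂ))
      ((-Real.sin (ω * t - β) * ω : ℝ) : ℂ) t := by
  have h1 : HasDerivAt (fun t : ℝ => ω * t - β) ω t := by
    simpa using ((hasDerivAt_id t).const_mul ω).sub_const β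
  exact ((Real.hasDerivAt_cos _).comp t h1).ofReal_comp

lemma key_ibp (β : ℝ) (a : ℝ → ℂ) (u v : ℝ) (huv : u < v)
    (ha : ContDiffOn ℝ 2 a (Set.Icc u v))
    (hdd : IntegrableOn (fun t => deriv (deriv a) t) (Set.Ioc u v))
    (ω : ℝ) (hω : 1 ≤ ω) :
    ‖(∫ t in u..v, ((Real.cos (ω * t - β) : ℝ) : ℂ) * a t)
        - (((Real.sin (ω * v - β) : ℝ) : ℂ) * a v
            - ((Real.sin (ω * u - β) : ℝ) : ℂ) * a u) / ω‖
      ≤ (‖derivWithin a (Set.Icc u v) u‖ + ‖derivWithin a (Set.Icc u v) v‖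
          + ∫ t in Set.Ioc u v, ‖deriv (deriv a) t‖) / ω ^ 2 := by
  have hω0 : (0 : ℝ) < ω := lt_of_lt_of_le one_pos hω
  have hωc : (ω : ℂ) ≠ 0 := by exact_mod_cast hω0.ne'
  set A : ℝ → ℂ := derivWithin a (Set.Icc u v) with hA
  set F : ℝ → ℂ := fun t =>
    ((Real.sin (ω * t - β) : ℝ) : ℂ) / ω * a t
      + ((Real.cos (ω * t - β) : ℝ) : ℂ) / ω ^ 2 * A t with hF
  have hconts : Continuous fun t : ℝ => ((Real.sin (ω * t - β) : ℝ) : ℂ) := by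
    fun_prop
  have hcontc : Continuous fun t : ℝ => ((Real.cos (ω * t - β) : ℝ) : ℂ) := by
    fun_prop
  have hcontF : ContinuousOn F (Set.Icc u v) := by
    apply ContinuousOn.add
    · exact ((hconts.continuousOn.div_const _).mul ha.continuousOn)
    · refine (hcontc.continuousOn.div_const _).mul ?_
      exact ha.continuousOn_derivWithin (uniqueDiffOn_Icc huv) (by norm_num)
  have hderivF : ∀ t ∈ Set.Ioo u v,
      HasDerivAt F (((Real.cos (ω * t - β) : ℝ) : ℂ) * a t
        + ((Real.cos (ω * t - β) : ℝ) : ℂ) / ω ^ 2 * deriv (deriv a) t) t := by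
    intro t ht
    have hmem : Set.Icc u v ∈ nhds t := Icc_mem_nhds ht.1 ht.2
    have hat : ContDiffAt ℝ 2 a t := ha.contDiffAt hmem
    obtain ⟨U, hUnhds, hU⟩ := hat.contDiffOn le_rfl (by simp)
    have htV : t ∈ interior U ∩ Set.Ioo u v :=
      ⟨mem_interior_iff_mem_nhds.2 hUnhds, ht⟩
    set V := interior U ∩ Set.Ioo u v with hV
    have hopen : IsOpen V := isOpen_interior.inter isOpen_Ioo
    have haV : ContDiffOn ℝ 2 a V := hU.mono (fun x hx => interior_subset hx.1)
    have haV' : ContDiffOn ℝ ((1 : ℕ) + 1) a V := by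
      convert haV using 2
      norm_num
    rw [contDiffOn_succ_iff_deriv_of_isOpen hopen] at haV'
    obtain ⟨hdiff, -, hda⟩ := haV'
    have h1 : HasDerivAt a (deriv a t) t :=
      (hdiff.differentiableAt (hopen.mem_nhds htV)).hasDerivAt
    have h2 : HasDerivAt (deriv a) (deriv (deriv a) t) t :=
      ((hda.differentiableOn (by simp)).differentiableAt (hopen.mem_nhds htV)).hasDerivAt
    have hG : HasDerivAt (fun t =>
        ((Real.sin (ω * t - β) : ℝ) : ℂ) / ω * a t
          + ((Real.cos (ω * t - β) : ℝ) : ℂ) / ω ^ 2 * deriv a t)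
        (((Real.cos (ω * t - β) * ω : ℝ) : ℂ) / ω * a t
          + ((Real.sin (ω * t - β) : ℝ) : ℂ) / ω * deriv a t
          + (((-Real.sin (ω * t - β) * ω : ℝ) : ℂ) / ω ^ 2 * deriv a t
            + ((Real.cos (ω * t - β) : ℝ) : ℂ) / ω ^ 2 * deriv (deriv a) t)) t := by
      exact (((hasDerivAt_sinc ω β t).div_const _).mul h1).add
        (((hasDerivAt_cosc ω β t).div_const _).mul h2)
    have hFG : F =ᶠ[nhds t] (fun t =>
        ((Real.sin (ω * t - β) : ℝ) : ℂ) / ω * a t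
          + ((Real.cos (ω * t - β) : ℝ) : ℂ) / ω ^ 2 * deriv a t) := by
      filter_upwards [Ioo_mem_nhds ht.1 ht.2] with s hs
      have : A s = deriv a s :=
        derivWithin_of_mem_nhds (Icc_mem_nhds hs.1 hs.2)
      simp [hF, this]
    have := hG.congr_of_eventuallyEq hFG
    convert this using 1
    · rfl
    push_cast
    field_simp
    ring
  have hint1 : IntervalIntegrable (fun t => ((Real.cos (ω * t - β) : ℝ) : ℂ) * a t)
      volume u v := by
    apply ContinuousOn.intervalIntegrable
    rw [uIcc_of_le huv.le]
    exact hcontc.continuousOn.mul ha.continuousOn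
  have hint2 : IntervalIntegrable
      (fun t => ((Real.cos (ω * t - β) : ℝ) : ℂ) / ω ^ 2 * deriv (deriv a) t)
      volume u v := by
    rw [intervalIntegrable_iff_integrableOn_Ioc_of_le huv.le]
    refine (hdd.bdd_mul (c := 1 / ω ^ 2) ?_ (Eventually.of_forall fun x => ?_))
    · exact (hcontc.div_const _).aestronglyMeasurable
    · rw [norm_div, ← Complex.ofReal_pow, Complex.norm_real, Complex.norm_real,
        Real.norm_eq_abs, Real.norm_eq_abs, abs_of_nonneg (by positivity : (0:ℝ) ≤ ω ^ 2)]
      gcongr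
      exact Real.abs_cos_le_one _
  have hsum : IntervalIntegrable (fun t => ((Real.cos (ω * t - β) : ℝ) : ℂ) * a t
      + ((Real.cos (ω * t - β) : ℝ) : ℂ) / ω ^ 2 * deriv (deriv a) t) volume u v :=
    hint1.add hint2
  have heq := integral_eq_sub_of_hasDerivAt_of_le huv.le hcontF hderivF hsum
  rw [integral_add hint1 hint2] at heq
  have hmain : (∫ t in u..v, ((Real.cos (ω * t - β) : ℝ) : ℂ) * a t)
      - (((Real.sin (ω * v - β) : ℝ) : ℂ) * a v
          - ((Real.sin (ω * u - β) : ℝ) : ℂ) * a u) / ω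
      = (((Real.cos (ω * v - β) : ℝ) : ℂ) * A v
          - ((Real.cos (ω * u - β) : ℝ) : ℂ) * A u) / ω ^ 2
        - ∫ t in u..v, ((Real.cos (ω * t - β) : ℝ) : ℂ) / ω ^ 2 * deriv (deriv a) t := by
    have hFv : F v = ((Real.sin (ω * v - β) : ℝ) : ℂ) / ω * a v
        + ((Real.cos (ω * v - β) : ℝ) : ℂ) / ω ^ 2 * A v := rfl
    have hFu : F u = ((Real.sin (ω * u - β) : ℝ) : ℂ) / ω * a u
        + ((Real.cos (ω * u - β) : ℝ) : ℂ) / ω ^ 2 * A u := rfl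
    rw [hFv, hFu] at heq
    linear_combination heq
  rw [hmain]
  have J0 : (0:ℝ) ≤ ∫ t in Set.Ioc u v, ‖deriv (deriv a) t‖ :=
    integral_nonneg (fun t => norm_nonneg _)
  have hb1 : ‖(((Real.cos (ω * v - β) : ℝ) : ℂ) * A v
      - ((Real.cos (ω * u - β) : ℝ) : ℂ) * A u) / (ω:ℂ) ^ 2‖
      ≤ (‖A u‖ + ‖A v‖) / ω ^ 2 := by
    rw [norm_div, ← Complex.ofReal_pow, Complex.norm_real, Real.norm_eq_abs,
      abs_of_nonneg (by positivity : (0:ℝ) ≤ ω ^ 2)]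
    gcongr
    calc ‖((Real.cos (ω * v - β) : ℝ) : ℂ) * A v
        - ((Real.cos (ω * u - β) : ℝ) : ℂ) * A u‖
        ≤ ‖((Real.cos (ω * v - β) : ℝ) : ℂ) * A v‖
          + ‖((Real.cos (ω * u - β) : ℝ) : ℂ) * A u‖ := norm_sub_le _ _
      _ ≤ 1 * ‖A v‖ + 1 * ‖A u‖ := by
          rw [norm_mul, norm_mul]
          gcongr
          · rw [Complex.norm_real, Real.norm_eq_abs]; exact Real.abs_cos_le_one _
          · rw [Complex.norm_real, Real.norm_eq_abs]; exact Real.abs_cos_le_one _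
      _ = ‖A u‖ + ‖A v‖ := by ring
  have hb2 : ‖∫ t in u..v, ((Real.cos (ω * t - β) : ℝ) : ℂ) / ω ^ 2
      * deriv (deriv a) t‖ ≤ (1 / ω ^ 2) * ∫ t in Set.Ioc u v, ‖deriv (deriv a) t‖ := by
    have h1 : ‖∫ t in u..v, ((Real.cos (ω * t - β) : ℝ) : ℂ) / ω ^ 2
        * deriv (deriv a) t‖ ≤ ∫ t in u..v, ‖((Real.cos (ω * t - β) : ℝ) : ℂ) / ω ^ 2
        * deriv (deriv a) t‖ := intervalIntegral.norm_integral_le_integral_norm huv.le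
    refine h1.trans ?_
    have h2 : ∫ t in u..v, ‖((Real.cos (ω * t - β) : ℝ) : ℂ) / ω ^ 2
        * deriv (deriv a) t‖ ≤ ∫ t in u..v, (1 / ω ^ 2) * ‖deriv (deriv a) t‖ := by
      apply intervalIntegral.integral_mono_on huv.le hint2.norm
      · apply IntervalIntegrable.const_mul
        rw [intervalIntegrable_iff_integrableOn_Ioc_of_le huv.le]
        exact hdd.norm
      · intro x hx
        rw [norm_mul, norm_div, ← Complex.ofReal_pow, Complex.norm_real,
          Complex.norm_real, Real.norm_eq_abs, Real.norm_eq_abs,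
          abs_of_nonneg (by positivity : (0:ℝ) ≤ ω ^ 2)]
        gcongr
        exact Real.abs_cos_le_one _
    refine h2.trans ?_
    rw [intervalIntegral.integral_const_mul,
      intervalIntegral.integral_of_le huv.le]
  calc ‖(((Real.cos (ω * v - β) : ℝ) : ℂ) * A v
      - ((Real.cos (ω * u - β) : ℝ) : ℂ) * A u) / (ω:ℂ) ^ 2
      - ∫ t in u..v, ((Real.cos (ω * t - β) : ℝ) : ℂ) / ω ^ 2 * deriv (deriv a) t‖
      ≤ ‖(((Real.cos (ω * v - β) : ℝ) : ℂ) * A v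
          - ((Real.cos (ω * u - β) : ℝ) : ℂ) * A u) / (ω:ℂ) ^ 2‖
        + ‖∫ t in u..v, ((Real.cos (ω * t - β) : ℝ) : ℂ) / ω ^ 2
            * deriv (deriv a) t‖ := norm_sub_le _ _
    _ ≤ (‖A u‖ + ‖A v‖) / ω ^ 2
        + (1 / ω ^ 2) * ∫ t in Set.Ioc u v, ‖deriv (deriv a) t‖ := add_le_add hb1 hb2
    _ = (‖A u‖ + ‖A v‖ + ∫ t in Set.Ioc u v, ‖deriv (deriv a) t‖) / ω ^ 2 := by
        field_simp


lemma contDiffAt_deriv_bits {a : ℝ → ℂ} {x : ℝ} (h : ContDiffAt ℝ 2 a x) :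
    ContinuousAt (deriv a) x ∧ HasDerivAt (deriv a) (deriv (deriv a) x) x := by
  obtain ⟨U, hUnhds, hU⟩ := h.contDiffOn le_rfl (by simp)
  have hx : x ∈ interior U := mem_interior_iff_mem_nhds.2 hUnhds
  have hopen : IsOpen (interior U) := isOpen_interior
  have haV : ContDiffOn ℝ ((1 : ℕ) + 1) a (interior U) := by
    convert hU.mono interior_subset using 2
    norm_num
  rw [contDiffOn_succ_iff_deriv_of_isOpen hopen] at haV
  obtain ⟨hdiff, -, hda⟩ := haV
  refine ⟨hda.continuousOn.continuousAt (hopen.mem_nhds hx), ?_⟩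
  exact ((hda.differentiableOn (by simp)).differentiableAt (hopen.mem_nhds hx)).hasDerivAt

lemma main_est (β : ℝ) (a : ℝ → ℂ)
    (ha_int : IntegrableOn a (Set.Ioi 0))
    (ha_cont : ContinuousOn a (Set.Ici 0))
    (ha_pw : PiecewiseCn 2 a)
    (ha_lim : Tendsto a atTop (nhds 0))
    (ha_dd : IntegrableOn (fun t : ℝ => deriv (deriv a) t) (Set.Ioi 0)) :
    ∃ CR : ℝ, 0 ≤ CR ∧ ∀ ω : ℝ, 1 ≤ ω →
      ‖(∫ s in Set.Ioi (0:ℝ), ((Real.cos (ω * s - β) : ℝ) : ℂ) * a s)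
          - (Real.sin β : ℂ) * a 0 / ω‖ ≤ CR / ω ^ 2 := by
  obtain ⟨N, t, ht0, htmono, hpc, htail⟩ := ha_pw
  set J : ℝ := ∫ s in Set.Ioi (0:ℝ), ‖deriv (deriv a) s‖ with hJ
  have hJ0 : 0 ≤ J := integral_nonneg fun s => norm_nonneg _
  set T : ℕ → ℝ := fun i => t ⟨min i N, Nat.lt_succ_of_le (min_le_right _ _)⟩ with hTdef
  have hTeq : ∀ i (h : i ≤ N), T i = t ⟨i, Nat.lt_succ_of_le h⟩ := by
    intro i h
    simp only [hTdef]
    congr 1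
    exact Fin.ext (by simp [min_eq_left h])
  have hT0 : T 0 = 0 := by rw [hTeq 0 (Nat.zero_le N)]; exact ht0 ▸ rfl
  have hTnonneg : ∀ i, 0 ≤ T i := by
    intro i
    have : t 0 ≤ t ⟨min i N, Nat.lt_succ_of_le (min_le_right _ _)⟩ :=
      htmono.monotone (Fin.zero_le _)
    rw [ht0] at this
    exact this
  have hTmono : ∀ i, i < N → T i < T (i + 1) := by
    intro i hi
    rw [hTeq i hi.le, hTeq (i + 1) hi]
    exact htmono (by simp [Fin.lt_def])
  set tN : ℝ := T N with htN
  have htNlast : tN = t (Fin.last N) := by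
    rw [htN, hTeq N le_rfl]; rfl
  have htail' : ContDiffOn ℝ 2 a (Set.Ici tN) := htNlast ▸ htail
  have htN0 : 0 ≤ tN := hTnonneg N
  -- pieces
  have hpiece : ∀ i, i < N → ContDiffOn ℝ 2 a (Set.Icc (T i) (T (i + 1))) := by
    intro i hi
    have := hpc ⟨i, hi⟩
    have e1 : t (Fin.castSucc ⟨i, hi⟩) = T i := by
      rw [hTeq i hi.le]; exact congrArg t (Fin.ext (by simp))
    have e2 : t (Fin.succ ⟨i, hi⟩) = T (i + 1) := by
      rw [hTeq (i + 1) hi]; exact congrArg t (Fin.ext (by simp))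
    rwa [e1, e2] at this
  have hddm : ∀ u v : ℝ, 0 ≤ u →
      IntegrableOn (fun s : ℝ => deriv (deriv a) s) (Set.Ioc u v) := by
    intro u v hu
    exact ha_dd.mono_set fun x hx => lt_of_le_of_lt hu hx.1
  have hJm : ∀ u v : ℝ, 0 ≤ u →
      (∫ s in Set.Ioc u v, ‖deriv (deriv a) s‖) ≤ J := by
    intro u v hu
    apply setIntegral_mono_set ha_dd.norm
    · exact Eventually.of_forall fun s => norm_nonneg _
    · exact HasSubset.Subset.eventuallyLE fun x hx => lt_of_le_of_lt hu hx.1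
  -- bound on deriv a for b ≥ tN + 1
  have hcda : ∀ x : ℝ, tN < x → ContDiffAt ℝ 2 a x := by
    intro x hx
    exact htail'.contDiffAt (Ici_mem_nhds hx)
  have hKbd : ∀ b : ℝ, tN + 1 ≤ b → ‖deriv a b‖ ≤ ‖deriv a (tN + 1)‖ + J := by
    intro b hb
    have hftc : ∫ s in (tN + 1)..b, deriv (deriv a) s = deriv a b - deriv a (tN + 1) := by
      apply integral_eq_sub_of_hasDerivAt_of_le hb
      · intro x hx
        exact ((contDiffAt_deriv_bits (hcda x (by cases hx with
            | intro h1 h2 => linarith))).1).continuousWithinAt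
      · intro x hx
        exact (contDiffAt_deriv_bits (hcda x (by cases hx with
            | intro h1 h2 => linarith))).2
      · rw [intervalIntegrable_iff_integrableOn_Ioc_of_le hb]
        exact hddm _ _ (by linarith)
    have h1 : ‖deriv a b‖ ≤ ‖deriv a (tN + 1)‖ + ‖∫ s in (tN + 1)..b, deriv (deriv a) s‖ := by
      have : deriv a b = deriv a (tN + 1) + ∫ s in (tN + 1)..b, deriv (deriv a) s := by
        rw [hftc]; ring
      rw [this]; exact norm_add_le _ _
    refine h1.trans ?_
    gcongr
    calc ‖∫ s in (tN + 1)..b, deriv (deriv a) s‖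
        ≤ ∫ s in (tN + 1)..b, ‖deriv (deriv a) s‖ :=
          intervalIntegral.norm_integral_le_integral_norm hb
      _ = ∫ s in Set.Ioc (tN + 1) b, ‖deriv (deriv a) s‖ :=
          intervalIntegral.integral_of_le hb
      _ ≤ J := hJm _ _ (by linarith)
  -- constants
  set K : ℝ := ‖deriv a (tN + 1)‖ + J with hK
  set ANu : ℝ := ‖derivWithin a (Set.Ici tN) tN‖ with hANu
  set Dsum : ℝ := ∑ i ∈ Finset.range N,
    (‖derivWithin a (Set.Icc (T i) (T (i + 1))) (T i)‖
      + ‖derivWithin a (Set.Icc (T i) (T (i + 1))) (T (i + 1))‖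
      + ∫ s in Set.Ioc (T i) (T (i + 1)), ‖deriv (deriv a) s‖) with hDsum
  have hDsum0 : 0 ≤ Dsum := by
    apply Finset.sum_nonneg
    intro i _
    exact add_nonneg (add_nonneg (norm_nonneg _) (norm_nonneg _))
      (integral_nonneg fun s => norm_nonneg _)
  have hK0 : 0 ≤ K := add_nonneg (norm_nonneg _) hJ0
  have hANu0 : 0 ≤ ANu := norm_nonneg _
  refine ⟨Dsum + ANu + K + J,
    add_nonneg (add_nonneg (add_nonneg hDsum0 hANu0) hK0) hJ0, ?_⟩
  intro ω hω
  have hω0 : (0:ℝ) < ω := lt_of_lt_of_le one_pos hω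
  have hωc : (ω : ℂ) ≠ 0 := by exact_mod_cast hω0.ne'
  -- integrability of the cosine * a
  have hcontc : Continuous fun s : ℝ => ((Real.cos (ω * s - β) : ℝ) : ℂ) := by fun_prop
  have hIca : IntegrableOn (fun s => ((Real.cos (ω * s - β) : ℝ) : ℂ) * a s) (Set.Ioi 0) := by
    refine ha_int.bdd_mul (c := 1) hcontc.aestronglyMeasurable (Eventually.of_forall fun x => ?_)
    rw [Complex.norm_real, Real.norm_eq_abs]
    exact Real.abs_cos_le_one _
  have hlim1 : Tendsto (fun b => ∫ s in (0:ℝ)..b, ((Real.cos (ω * s - β) : ℝ) : ℂ) * a s)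
      atTop (nhds (∫ s in Set.Ioi (0:ℝ), ((Real.cos (ω * s - β) : ℝ) : ℂ) * a s)) :=
    intervalIntegral_tendsto_integral_Ioi 0 hIca tendsto_id
  have hlim2 : Tendsto (fun b => ((Real.sin (ω * b - β) : ℝ) : ℂ) * a b / ω) atTop (nhds 0) := by
    apply squeeze_zero_norm ?_ (tendsto_zero_iff_norm_tendsto_zero.1 ha_lim)
    intro b
    rw [norm_div, norm_mul, Complex.norm_real, Real.norm_eq_abs, Complex.norm_real,
      Real.norm_eq_abs, abs_of_pos hω0]
    calc |Real.sin (ω * b - β)| * ‖a b‖ / ω ≤ 1 * ‖a b‖ / ω := by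
          gcongr; exact Real.abs_sin_le_one _
      _ = ‖a b‖ / ω := by ring
      _ ≤ ‖a b‖ := div_le_self (norm_nonneg _) hω
  have hGlim : Tendsto (fun b => (∫ s in (0:ℝ)..b, ((Real.cos (ω * s - β) : ℝ) : ℂ) * a s)
      - (((Real.sin (ω * b - β) : ℝ) : ℂ) * a b / ω
          - ((Real.sin (ω * 0 - β) : ℝ) : ℂ) * a 0 / ω)) atTop
      (nhds ((∫ s in Set.Ioi (0:ℝ), ((Real.cos (ω * s - β) : ℝ) : ℂ) * a s)
        - (Real.sin β : ℂ) * a 0 / ω)) := by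
    have h := hlim1.sub (hlim2.sub (tendsto_const_nhds
      (x := ((Real.sin (ω * 0 - β) : ℝ) : ℂ) * a 0 / ω)))
    convert h using 2
    have : ω * 0 - β = -β := by ring
    rw [this, Real.sin_neg]
    push_cast
    ring
  refine le_of_tendsto hGlim.norm ?_
  filter_upwards [eventually_ge_atTop (tN + 1)] with b hb
  have htNb : tN < b := by linarith
  -- interval integrability of cos * a on [u,v] ⊆ [0,∞)
  have hci : ∀ u v : ℝ, 0 ≤ u → u ≤ v →
      IntervalIntegrable (fun s => ((Real.cos (ω * s - β) : ℝ) : ℂ) * a s) volume u v := by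
    intro u v hu h
    apply ContinuousOn.intervalIntegrable
    rw [uIcc_of_le h]
    exact hcontc.continuousOn.mul (ha_cont.mono (fun x hx => le_trans hu hx.1))
  -- telescoping decomposition
  set f : ℕ → ℂ := fun i => ((Real.sin (ω * T i - β) : ℝ) : ℂ) * a (T i) / ω with hf
  have hadj : ∀ k < N, IntervalIntegrable
      (fun s => ((Real.cos (ω * s - β) : ℝ) : ℂ) * a s) volume (T k) (T (k + 1)) :=
    fun k hk => hci _ _ (hTnonneg k) (hTmono k hk).le
  have hsum1 : ∑ i ∈ Finset.range N,
      ∫ s in (T i)..(T (i + 1)), ((Real.cos (ω * s - β) : ℝ) : ℂ) * a s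
      = ∫ s in (T 0)..(T N), ((Real.cos (ω * s - β) : ℝ) : ℂ) * a s :=
    sum_integral_adjacent_intervals hadj
  have hsplit : (∫ s in (T 0)..(T N), ((Real.cos (ω * s - β) : ℝ) : ℂ) * a s)
      + (∫ s in (T N)..b, ((Real.cos (ω * s - β) : ℝ) : ℂ) * a s)
      = ∫ s in (T 0)..b, ((Real.cos (ω * s - β) : ℝ) : ℂ) * a s := by
    apply integral_add_adjacent_intervals
    · exact hci _ _ (by rw [hT0]) (by rw [hT0]; exact htN0)
    · exact hci _ _ htN0 htNb.le
  have hGb : (∫ s in (0:ℝ)..b, ((Real.cos (ω * s - β) : ℝ) : ℂ) * a s)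
      - (((Real.sin (ω * b - β) : ℝ) : ℂ) * a b / ω
          - ((Real.sin (ω * 0 - β) : ℝ) : ℂ) * a 0 / ω)
      = (∑ i ∈ Finset.range N,
          ((∫ s in (T i)..(T (i + 1)), ((Real.cos (ω * s - β) : ℝ) : ℂ) * a s)
            - (f (i + 1) - f i)))
        + ((∫ s in (T N)..b, ((Real.cos (ω * s - β) : ℝ) : ℂ) * a s)
            - (((Real.sin (ω * b - β) : ℝ) : ℂ) * a b / ω - f N)) := by
    rw [Finset.sum_sub_distrib, hsum1, Finset.sum_range_sub f]
    have hb0 : (∫ s in (0:ℝ)..b, ((Real.cos (ω * s - β) : ℝ) : ℂ) * a s)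
        = ∫ s in (T 0)..b, ((Real.cos (ω * s - β) : ℝ) : ℂ) * a s := by rw [hT0]
    rw [hb0, ← hsplit]
    have hf0 : f 0 = ((Real.sin (ω * 0 - β) : ℝ) : ℂ) * a 0 / ω := by
      rw [hf]; simp only [hT0]
    rw [hf0]
    ring
  rw [hGb]
  -- per-piece bounds
  have hpieceB : ∀ i ∈ Finset.range N,
      ‖(∫ s in (T i)..(T (i + 1)), ((Real.cos (ω * s - β) : ℝ) : ℂ) * a s)
        - (f (i + 1) - f i)‖
      ≤ (‖derivWithin a (Set.Icc (T i) (T (i + 1))) (T i)‖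
          + ‖derivWithin a (Set.Icc (T i) (T (i + 1))) (T (i + 1))‖
          + ∫ s in Set.Ioc (T i) (T (i + 1)), ‖deriv (deriv a) s‖) / ω ^ 2 := by
    intro i hi
    rw [Finset.mem_range] at hi
    have hkey := key_ibp β a (T i) (T (i + 1)) (hTmono i hi) (hpiece i hi)
      (hddm _ _ (hTnonneg i)) ω hω
    rw [sub_div] at hkey
    exact hkey
  -- tail bound
  have htailB : ‖(∫ s in (T N)..b, ((Real.cos (ω * s - β) : ℝ) : ℂ) * a s)
      - (((Real.sin (ω * b - β) : ℝ) : ℂ) * a b / ω - f N)‖ ≤ (ANu + K + J) / ω ^ 2 := by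
    have hkey := key_ibp β a tN b htNb (htail'.mono Icc_subset_Ici_self)
      (hddm _ _ htN0) ω hω
    have e2 : derivWithin a (Set.Icc tN b) tN = derivWithin a (Set.Ici tN) tN := by
      have hdiff : DifferentiableWithinAt ℝ a (Set.Ici tN) tN :=
        htail'.differentiableOn (by norm_num) tN (mem_Ici.2 le_rfl)
      exact (hdiff.hasDerivWithinAt.mono Icc_subset_Ici_self).derivWithin
        ((uniqueDiffOn_Icc htNb) tN ⟨le_rfl, htNb.le⟩)
    have e3 : derivWithin a (Set.Icc tN b) b = deriv a b := by
      have hca : ContDiffAt ℝ 2 a b := hcda b htNb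
      have hd : DifferentiableAt ℝ a b := hca.differentiableAt (by norm_num)
      exact hd.hasDerivAt.hasDerivWithinAt.derivWithin
        ((uniqueDiffOn_Icc htNb) b ⟨htNb.le, le_rfl⟩)
    rw [e2, e3, sub_div] at hkey
    have hfN : f N = ((Real.sin (ω * tN - β) : ℝ) : ℂ) * a tN / ω := by rw [hf]
    rw [hfN]
    refine hkey.trans ?_
    gcongr
    · exact hKbd b hb
    · exact hJm _ _ htN0
  calc ‖(∑ i ∈ Finset.range N,
        ((∫ s in (T i)..(T (i + 1)), ((Real.cos (ω * s - β) : ℝ) : ℂ) * a s)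
          - (f (i + 1) - f i)))
      + ((∫ s in (T N)..b, ((Real.cos (ω * s - β) : ℝ) : ℂ) * a s)
          - (((Real.sin (ω * b - β) : ℝ) : ℂ) * a b / ω - f N))‖
      ≤ ‖∑ i ∈ Finset.range N,
          ((∫ s in (T i)..(T (i + 1)), ((Real.cos (ω * s - β) : ℝ) : ℂ) * a s)
            - (f (i + 1) - f i))‖
        + ‖(∫ s in (T N)..b, ((Real.cos (ω * s - β) : ℝ) : ℂ) * a s)
            - (((Real.sin (ω * b - β) : ℝ) : ℂ) * a b / ω - f N)‖ := norm_add_le _ _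
    _ ≤ (∑ i ∈ Finset.range N,
          (‖derivWithin a (Set.Icc (T i) (T (i + 1))) (T i)‖
            + ‖derivWithin a (Set.Icc (T i) (T (i + 1))) (T (i + 1))‖
            + ∫ s in Set.Ioc (T i) (T (i + 1)), ‖deriv (deriv a) s‖) / ω ^ 2)
        + (ANu + K + J) / ω ^ 2 :=
      add_le_add ((norm_sum_le _ _).trans (Finset.sum_le_sum hpieceB)) htailB
    _ = (Dsum + ANu + K + J) / ω ^ 2 := by
        rw [← Finset.sum_div, ← hDsum]
        ring



/-- Let `α = πν/2 + π/4` with `ν > -1`, and let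
`a ∈ L^∞(ℝ₊) ∩ L¹(ℝ₊)` be continuous and piecewise `C²` on `[0,∞)` with `a(x) → 0` as
`x → ∞` and `a'' ∈ L¹(ℝ₊)`. Then the kernel
`H_a(x,y) = -sin(2α) a(0)/(π(x+y)) + (1/π) ∫_0^∞ cos((x+y)t - 2α) a(t) dt`
satisfies `|H_a(x,y)| ≤ C/(x+y)²` for some `C `, and the corresponding integral operator
on `L²[1,∞)` is Hilbert–Schmidt (its kernel is square integrable on `[1,∞)²`). -/
theorem hankel_kernel_hilbertSchmidt
    (ν : ℝ) (hν : -1 < ν) (a : ℝ → ℂ)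
    (ha_inf : MemLp a ⊤ (volume.restrict (Set.Ioi (0 : ℝ))))
    (ha_int : IntegrableOn a (Set.Ioi 0))
    (ha_cont : ContinuousOn a (Set.Ici 0))
    (ha_pw : PiecewiseCn 2 a)
    (ha_lim : Tendsto a atTop (nhds 0))
    (ha_dd : IntegrableOn (fun t : ℝ => deriv (deriv a) t) (Set.Ioi 0))
    (Hker : ℝ → ℝ → ℂ)
    (hHker : ∀ x y : ℝ, Hker x y =
      -((Real.sin (2 * (Real.pi * ν / 2 + Real.pi / 4)) : ℂ) * a 0) /
          ((Real.pi : ℂ) * ((x : ℂ) + (y : ℂ))) +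
        (1 / (Real.pi : ℂ)) *
          ∫ t in Set.Ioi (0 : ℝ),
            ((Real.cos ((x + y) * t - 2 * (Real.pi * ν / 2 + Real.pi / 4)) : ℝ) : ℂ) * a t) :
    (∃ C : ℝ, ∀ x : ℝ, 1 ≤ x → ∀ y : ℝ, 1 ≤ y → ‖Hker x y‖ ≤ C / (x + y) ^ 2) ∧
    IntegrableOn (fun p : ℝ × ℝ => ‖Hker p.1 p.2‖ ^ 2) (Set.Ici 1 ×ˢ Set.Ici 1) := by
  obtain ⟨CR, hCR0, hCR⟩ := main_est (2 * (Real.pi * ν / 2 + Real.pi / 4)) a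
    ha_int ha_cont ha_pw ha_lim ha_dd
  have hπ : (0:ℝ) < Real.pi := Real.pi_pos
  have hπc : (Real.pi : ℂ) ≠ 0 := by exact_mod_cast hπ.ne'
  set C : ℝ := CR / Real.pi with hC
  have hC0 : 0 ≤ C := div_nonneg hCR0 hπ.le
  have hHeq : ∀ x y : ℝ, 1 ≤ x → 1 ≤ y → Hker x y
      = (1 / (Real.pi : ℂ)) *
        ((∫ s in Set.Ioi (0:ℝ),
            ((Real.cos ((x + y) * s - 2 * (Real.pi * ν / 2 + Real.pi / 4)) : ℝ) : ℂ) * a s)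
          - (Real.sin (2 * (Real.pi * ν / 2 + Real.pi / 4)) : ℂ) * a 0 / ((x + y : ℝ) : ℂ)) := by
    intro x y hx hy
    have hxy : ((x:ℂ) + (y:ℂ)) = ((x + y : ℝ) : ℂ) := by push_cast; ring
    have hxy0 : ((x + y : ℝ) : ℂ) ≠ 0 := by
      exact_mod_cast (by linarith : (0:ℝ) < x + y).ne'
    rw [hHker x y, hxy]
    rw [mul_sub]
    ring
  have hbd : ∀ x : ℝ, 1 ≤ x → ∀ y : ℝ, 1 ≤ y → ‖Hker x y‖ ≤ C / (x + y) ^ 2 := by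
    intro x hx y hy
    rw [hHeq x y hx hy, norm_mul]
    have h1 : ‖(1 / (Real.pi : ℂ))‖ = 1 / Real.pi := by
      rw [norm_div, norm_one, Complex.norm_real, Real.norm_eq_abs, abs_of_pos hπ]
    rw [h1]
    have h2 := hCR (x + y) (by linarith)
    calc (1 / Real.pi) * ‖(∫ s in Set.Ioi (0:ℝ),
            ((Real.cos ((x + y) * s - 2 * (Real.pi * ν / 2 + Real.pi / 4)) : ℝ) : ℂ) * a s)
          - (Real.sin (2 * (Real.pi * ν / 2 + Real.pi / 4)) : ℂ) * a 0 / ((x + y : ℝ) : ℂ)‖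
        ≤ (1 / Real.pi) * (CR / (x + y) ^ 2) := by
          gcongr
      _ = C / (x + y) ^ 2 := by rw [hC]; ring
  refine ⟨⟨C, hbd⟩, ?_⟩
  -- measurability
  have hg : Continuous fun ω : ℝ => ∫ s in Set.Ioi (0:ℝ),
      ((Real.cos (ω * s - 2 * (Real.pi * ν / 2 + Real.pi / 4)) : ℝ) : ℂ) * a s := by
    apply continuous_of_dominated (bound := fun s => ‖a s‖)
    · intro ω
      exact ((Complex.continuous_ofReal.comp (Real.continuous_cos.comp
        ((continuous_const.mul continuous_id).sub continuous_const))).aestronglyMeasurable).mul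
        ha_int.aestronglyMeasurable
    · intro ω
      refine Eventually.of_forall fun s => ?_
      rw [norm_mul, Complex.norm_real, Real.norm_eq_abs]
      calc |Real.cos (ω * s - 2 * (Real.pi * ν / 2 + Real.pi / 4))| * ‖a s‖
          ≤ 1 * ‖a s‖ := by gcongr; exact Real.abs_cos_le_one _
        _ = ‖a s‖ := one_mul _
    · exact ha_int.norm
    · refine Eventually.of_forall fun s => ?_
      exact (Complex.continuous_ofReal.comp (Real.continuous_cos.comp
        ((continuous_id.mul continuous_const).sub continuous_const))).mul continuous_const
  have hmeas : AEStronglyMeasurable (fun p : ℝ × ℝ => Hker p.1 p.2)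
      (volume.restrict (Set.Ici 1 ×ˢ Set.Ici 1)) := by
    have heq2 : (fun p : ℝ × ℝ => Hker p.1 p.2) = fun p : ℝ × ℝ =>
        -((Real.sin (2 * (Real.pi * ν / 2 + Real.pi / 4)) : ℂ) * a 0) /
          ((Real.pi : ℂ) * ((p.1 : ℂ) + (p.2 : ℂ))) +
        (1 / (Real.pi : ℂ)) *
          ∫ t in Set.Ioi (0 : ℝ),
            ((Real.cos ((p.1 + p.2) * t - 2 * (Real.pi * ν / 2 + Real.pi / 4)) : ℝ) : ℂ) * a t :=
      funext fun p => hHker p.1 p.2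
    rw [heq2]
    apply Measurable.aestronglyMeasurable
    have hden : Measurable fun p : ℝ × ℝ => (Real.pi : ℂ) * ((p.1 : ℂ) + (p.2 : ℂ)) :=
      ((Complex.measurable_ofReal.comp measurable_fst).add
        (Complex.measurable_ofReal.comp measurable_snd)).const_mul _
    have hgm : Measurable fun p : ℝ × ℝ => ∫ t in Set.Ioi (0:ℝ),
        ((Real.cos ((p.1 + p.2) * t - 2 * (Real.pi * ν / 2 + Real.pi / 4)) : ℝ) : ℂ) * a t :=
      (hg.comp (continuous_fst.add continuous_snd)).measurable
    exact (measurable_const.mul hden.inv).add (measurable_const.mul hgm)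
  -- majorant
  have h2int : IntegrableOn (fun x : ℝ => (x ^ 2)⁻¹) (Set.Ici 1) := by
    rw [integrableOn_Ici_iff_integrableOn_Ioi]
    have h := integrableOn_Ioi_rpow_of_lt (show (-2:ℝ) < -1 by norm_num)
      (show (0:ℝ) < 1 by norm_num)
    apply h.congr_fun ?_ measurableSet_Ioi
    intro x hx
    have hx0 : (0:ℝ) < x := lt_trans one_pos hx
    show x ^ (-2:ℝ) = (x ^ 2)⁻¹
    rw [Real.rpow_neg hx0.le, ← Real.rpow_natCast x 2]
    norm_num
  have hmaj : IntegrableOn (fun p : ℝ × ℝ => (p.1 ^ 2)⁻¹ * (p.2 ^ 2)⁻¹)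
      (Set.Ici 1 ×ˢ Set.Ici 1) := by
    rw [IntegrableOn, Measure.volume_eq_prod, ← Measure.prod_restrict]
    exact h2int.mul_prod h2int
  refine Integrable.mono' ((hmaj.const_mul (C ^ 2 / 16))) ?_ ?_
  · exact ((hmeas.norm.aemeasurable.pow_const 2).aestronglyMeasurable)
  · rw [ae_restrict_iff' (measurableSet_Ici.prod measurableSet_Ici)]
    refine Eventually.of_forall fun p hp => ?_
    obtain ⟨hx, hy⟩ := hp
    rw [mem_Ici] at hx hy
    set x := p.1
    set y := p.2
    have hxy0 : (0:ℝ) < x + y := by linarith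
    rw [Real.norm_eq_abs, abs_of_nonneg (by positivity)]
    calc ‖Hker x y‖ ^ 2 ≤ (C / (x + y) ^ 2) ^ 2 :=
          pow_le_pow_left₀ (norm_nonneg _) (hbd x hx y hy) 2
      _ = C ^ 2 / ((x + y) ^ 2) ^ 2 := by rw [div_pow]
      _ ≤ C ^ 2 / (16 * x ^ 2 * y ^ 2) := by
          have hkey : ((x + y) ^ 2) ^ 2 - 16 * x ^ 2 * y ^ 2
              = (x - y) ^ 2 * ((x + y) ^ 2 + 4 * (x * y)) := by ring
          have h4 : (0:ℝ) ≤ (x - y) ^ 2 * ((x + y) ^ 2 + 4 * (x * y)) := by positivity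
          gcongr
          linarith [h4, hkey]
      _ = C ^ 2 / 16 * ((x ^ 2)⁻¹ * (y ^ 2)⁻¹) := by
          ring

end
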